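/- For every ε > 0, the link of the Whitney umbrella at the origin, namely the set {(x,y,z) ∈ ℝ³ | x² = z·y² ∧ z ≥ 0 ∧ x² + y² + z² = ε²} with its subspace topology, is homeomorphic to the figure eight, realized as the subspace F = {(a,b) ∈ ℝ² | (a−1)² + b² = 1 ∨ (a+1)² + b² = 1} of ℝ² (the union of two unit circles tangent at the origin). -/

import Mathlib

noncomputable def WUmap (ε : ℝ) (q : ℝ × ℝ) : ℝ × ℝ × ℝ :=
  (q.2 * Real.sqrt (ε^3 * |q.1| * (2 + |q.1|) * (8 - q.1^2) / (64 * (1 + ε * (4 - q.1^2) / 4))),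
   q.1 * Real.sqrt (ε^2 * (8 - q.1^2) / (16 * (1 + ε * (4 - q.1^2) / 4))),
   ε * (4 - q.1^2) / 4)

private lemma sq_eq_of_nonneg {u v : ℝ} (hu : 0 ≤ u) (hv : 0 ≤ v) (h : u^2 = v^2) : u = v := by
  rw [← Real.sqrt_sq hu, ← Real.sqrt_sq hv, h]

private lemma memF_iff (q : ℝ × ℝ) :
    ((q.1 - 1)^2 + q.2^2 = 1 ∨ (q.1 + 1)^2 + q.2^2 = 1) ↔ q.2^2 = 2*|q.1| - q.1^2 := by
  obtain ⟨a, b⟩ := q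
  simp only
  constructor
  · rintro (h | h)
    · have ha : 0 ≤ a := by nlinarith [sq_nonneg b]
      rw [abs_of_nonneg ha]; nlinarith
    · have ha : a ≤ 0 := by nlinarith [sq_nonneg b]
      rw [abs_of_nonpos ha]; nlinarith
  · intro h
    rcases le_total 0 a with ha | ha
    · left; rw [abs_of_nonneg ha] at h; nlinarith
    · right; rw [abs_of_nonpos ha] at h; nlinarith

private lemma alg1 (ε m a2 b2 : ℝ) (hm : m^2 = a2) (hb : b2 = 2*m - m^2)
    (hD : 1 + ε * (4 - a2) / 4 ≠ 0) :
    b2 * (ε^3 * m * (2 + m) * (8 - a2) / (64 * (1 + ε * (4 - a2) / 4))) =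
      ε * (4 - a2) / 4 * (a2 * (ε^2 * (8 - a2) / (16 * (1 + ε * (4 - a2) / 4)))) := by
  subst hm; subst hb
  field_simp
  ring

private lemma alg2 (ε m a2 b2 : ℝ) (hm : m^2 = a2) (hb : b2 = 2*m - m^2)
    (hD : 1 + ε * (4 - a2) / 4 ≠ 0) :
    b2 * (ε^3 * m * (2 + m) * (8 - a2) / (64 * (1 + ε * (4 - a2) / 4))) +
      a2 * (ε^2 * (8 - a2) / (16 * (1 + ε * (4 - a2) / 4))) + (ε * (4 - a2) / 4)^2 = ε^2 := by
  subst hm; subst hb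
  have e1 : (64 * (1 + ε * (4 - m^2) / 4)) = 16*(4 + 4*ε - ε*m^2) := by ring
  have e2 : (16 * (1 + ε * (4 - m^2) / 4)) = 4*(4 + 4*ε - ε*m^2) := by ring
  have hd : (4 + 4*ε - ε*m^2) ≠ 0 := fun h => hD (by rw [show (1 + ε * (4 - m^2) / 4) = (4 + 4*ε - ε*m^2)/4 by ring, h]; norm_num)
  rw [e1, e2]
  have hd' : 4 * (1 + ε) - m ^ 2 * ε ≠ 0 := by intro h; apply hd; linarith
  field_simp
  ring

private lemma WUmem (ε : ℝ) (hε : 0 < ε) {a b : ℝ} (hb2 : b^2 = 2*|a| - a^2) :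
    (WUmap ε (a,b)).1^2 = (WUmap ε (a,b)).2.2 * (WUmap ε (a,b)).2.1^2 ∧
    0 ≤ (WUmap ε (a,b)).2.2 ∧
    (WUmap ε (a,b)).1^2 + (WUmap ε (a,b)).2.1^2 + (WUmap ε (a,b)).2.2^2 = ε^2 := by
  have hm0 : 0 ≤ |a| := abs_nonneg a
  have hm2 : |a| ≤ 2 := by nlinarith [sq_nonneg b, sq_abs a]
  have ha4 : a^2 ≤ 4 := by nlinarith [sq_abs a]
  have hD : (0:ℝ) < 1 + ε * (4 - a^2) / 4 := by nlinarith
  have hargY : 0 ≤ ε^2 * (8 - a^2) / (16 * (1 + ε * (4 - a^2) / 4)) := by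
    apply div_nonneg
    · nlinarith [sq_nonneg ε]
    · nlinarith
  have hargX : 0 ≤ ε^3 * |a| * (2 + |a|) * (8 - a^2) / (64 * (1 + ε * (4 - a^2) / 4)) := by
    apply div_nonneg
    · have h3 : (0:ℝ) ≤ ε^3 := by positivity
      exact mul_nonneg (mul_nonneg (mul_nonneg h3 hm0) (by linarith)) (by nlinarith)
    · nlinarith
  simp only [WUmap]
  refine ⟨?_, ?_, ?_⟩
  · rw [mul_pow, mul_pow, Real.sq_sqrt hargX, Real.sq_sqrt hargY]
    exact alg1 ε |a| (a^2) (b^2) (sq_abs a) (by rw [sq_abs]; exact hb2) hD.ne'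
  · nlinarith
  · rw [mul_pow, mul_pow, Real.sq_sqrt hargX, Real.sq_sqrt hargY]
    exact alg2 ε |a| (a^2) (b^2) (sq_abs a) (by rw [sq_abs]; exact hb2) hD.ne'

private lemma WUsurj (ε : ℝ) (hε : 0 < ε) {x y z : ℝ} (hxz : x^2 = z * y^2) (hz0 : 0 ≤ z)
    (hs : x^2 + y^2 + z^2 = ε^2) :
    ∃ a b : ℝ, b^2 = 2*|a| - a^2 ∧ WUmap ε (a, b) = (x, y, z) := by
  have hzε : z ≤ ε := by nlinarith [sq_nonneg x, sq_nonneg y]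
  have hy2 : y^2 * (1+z) = ε^2 - z^2 := by linear_combination hs - hxz
  have hz1 : (0:ℝ) < 1 + z := by linarith
  set A : ℝ := 2 * Real.sqrt ((ε - z)/ε) with hAdef
  have harg : 0 ≤ (ε - z)/ε := div_nonneg (by linarith) hε.le
  have hA0 : 0 ≤ A := by positivity
  have hA2 : A^2 = 4*((ε-z)/ε) := by rw [hAdef, mul_pow, Real.sq_sqrt harg]; ring
  have hAle2 : A ≤ 2 := by
    have h1 : (ε - z)/ε ≤ 1 := by rw [div_le_one hε]; linarith
    nlinarith
  have hBarg : 0 ≤ 2*A - A^2 := by nlinarith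
  set B : ℝ := Real.sqrt (2*A - A^2) with hBdef
  have hB0 : 0 ≤ B := Real.sqrt_nonneg _
  have hB2 : B^2 = 2*A - A^2 := Real.sq_sqrt hBarg
  set a : ℝ := if 0 ≤ y then A else -A with hadef
  set b : ℝ := if 0 ≤ x then B else -B with hbdef
  have ha2 : a^2 = A^2 := by rw [hadef]; split_ifs <;> ring
  have haabs : |a| = A := by
    rw [hadef]; split_ifs
    · exact abs_of_nonneg hA0
    · rw [abs_neg]; exact abs_of_nonneg hA0
  have hb2B : b^2 = B^2 := by rw [hbdef]; split_ifs <;> ring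
  have hmemF : b^2 = 2*|a| - a^2 := by rw [hb2B, hB2, haabs, ha2]
  refine ⟨a, b, hmemF, ?_⟩
  have hzc : ε * (4 - a^2) / 4 = z := by
    rw [ha2, hA2]; field_simp; ring
  have hDz : 1 + ε * (4 - a^2) / 4 = 1 + z := by rw [hzc]
  have h8 : 4 ≤ 8 - a^2 := by nlinarith
  have hargY0 : 0 ≤ ε^2 * (8 - a^2) / (16 * (1 + z)) := by
    apply div_nonneg
    · nlinarith [sq_nonneg ε]
    · linarith
  have hsqY : (a * Real.sqrt (ε^2 * (8 - a^2) / (16 * (1 + z))))^2 = y^2 := by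
    rw [mul_pow, Real.sq_sqrt hargY0, ha2, hA2]
    field_simp
    linear_combination (-16)*hy2
  have hyc : a * Real.sqrt (ε^2 * (8 - a^2) / (16 * (1 + z))) = y := by
    by_cases hy : 0 ≤ y
    · have ha : a = A := if_pos hy
      exact sq_eq_of_nonneg (mul_nonneg (ha ▸ hA0) (Real.sqrt_nonneg _)) hy hsqY
    · have ha : a = -A := if_neg hy
      have h1 : -(a * Real.sqrt (ε^2 * (8 - a^2) / (16 * (1 + z)))) = -y := by
        apply sq_eq_of_nonneg
        · rw [ha]; simp only [neg_mul, neg_neg]; exact mul_nonneg hA0 (Real.sqrt_nonneg _)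
        · linarith [lt_of_not_ge hy]
        · rw [neg_sq, neg_sq]; exact hsqY
      linarith
  have hx2 : x^2 * (1+z) = z * (ε^2 - z^2) := by linear_combination (1+z)*hxz + z*hy2
  have hargX0 : 0 ≤ ε^3 * |a| * (2 + |a|) * (8 - a^2) / (64 * (1 + z)) := by
    apply div_nonneg
    · have h3 : (0:ℝ) ≤ ε^3 := by positivity
      exact mul_nonneg (mul_nonneg (mul_nonneg h3 (abs_nonneg a)) (by positivity)) (by linarith)
    · linarith
  have hsqX : (b * Real.sqrt (ε^3 * |a| * (2 + |a|) * (8 - a^2) / (64 * (1 + z))))^2 = x^2 := by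
    rw [mul_pow, Real.sq_sqrt hargX0, hb2B, hB2, haabs, ha2]
    rw [show (2*A - A^2) * (ε^3 * A * (2 + A) * (8 - A^2) / (64 * (1 + z)))
        = A^2 * (4 - A^2) * (8 - A^2) * ε^3 / (64 * (1 + z)) from by ring]
    rw [hA2]
    field_simp
    linear_combination (-64)*hx2
  have hxc : b * Real.sqrt (ε^3 * |a| * (2 + |a|) * (8 - a^2) / (64 * (1 + z))) = x := by
    by_cases hx : 0 ≤ x
    · have hb : b = B := if_pos hx
      exact sq_eq_of_nonneg (mul_nonneg (hb ▸ hB0) (Real.sqrt_nonneg _)) hx hsqX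
    · have hb : b = -B := if_neg hx
      have h1 : -(b * Real.sqrt (ε^3 * |a| * (2 + |a|) * (8 - a^2) / (64 * (1 + z)))) = -x := by
        apply sq_eq_of_nonneg
        · rw [hb]; simp only [neg_mul, neg_neg]; exact mul_nonneg hB0 (Real.sqrt_nonneg _)
        · linarith [lt_of_not_ge hx]
        · rw [neg_sq, neg_sq]; exact hsqX
      linarith
  show WUmap ε (a, b) = (x, y, z)
  simp only [WUmap]
  rw [Prod.mk.injEq, Prod.mk.injEq]
  refine ⟨?_, ?_, hzc⟩
  · rw [hDz]; exact hxc
  · rw [hDz]; exact hyc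

private lemma WUinj (ε : ℝ) (hε : 0 < ε) {a b a' b' : ℝ}
    (hb2 : b^2 = 2*|a| - a^2) (hb2' : b'^2 = 2*|a'| - a'^2)
    (h : WUmap ε (a, b) = WUmap ε (a', b')) : (a, b) = (a', b') := by
  have ha4 : a^2 ≤ 4 := by nlinarith [sq_nonneg b, sq_abs a, abs_nonneg a]
  have hD : (0:ℝ) < 1 + ε * (4 - a^2) / 4 := by nlinarith
  simp only [WUmap, Prod.mk.injEq] at h
  obtain ⟨h1, h2, h3⟩ := h
  have haa2 : a^2 = a'^2 := by
    have := mul_left_cancel₀ hε.ne' (show ε * (4 - a^2) = ε * (4 - a'^2) by linarith)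
    linarith
  have habs : |a'| = |a| :=
    sq_eq_of_nonneg (abs_nonneg a') (abs_nonneg a) (by rw [sq_abs, sq_abs]; exact haa2.symm)
  rw [← haa2] at h1 h2
  rw [habs] at h1
  have hSpos : 0 < Real.sqrt (ε^2 * (8 - a^2) / (16 * (1 + ε * (4 - a^2) / 4))) := by
    apply Real.sqrt_pos.mpr
    apply div_pos
    · nlinarith [pow_pos hε 2]
    · nlinarith
  have haa : a = a' := mul_right_cancel₀ hSpos.ne' h2
  have hbb : b = b' := by
    by_cases ha0 : a = 0
    · have hb : b = 0 := by
        have : b^2 = 0 := by rw [hb2, ha0]; simp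
        exact pow_eq_zero_iff two_ne_zero |>.mp this
      have hb' : b' = 0 := by
        have : b'^2 = 0 := by rw [hb2', ← haa, ha0]; simp
        exact pow_eq_zero_iff two_ne_zero |>.mp this
      rw [hb, hb']
    · have hTpos : 0 < Real.sqrt (ε^3 * |a| * (2 + |a|) * (8 - a^2) / (64 * (1 + ε * (4 - a^2) / 4))) := by
        apply Real.sqrt_pos.mpr
        apply div_pos
        · have h3' : (0:ℝ) < ε^3 := by positivity
          have hma : 0 < |a| := abs_pos.mpr ha0
          have h8 : (0:ℝ) < 8 - a^2 := by nlinarith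
          positivity
        · nlinarith
      exact mul_right_cancel₀ hTpos.ne' h1
  rw [haa, hbb]

/-- For every `ε > 0`, the link of the Whitney umbrella at the origin is
homeomorphic to the figure eight (two unit circles in `ℝ²` tangent at the
origin). -/
theorem stmt_5 (ε : ℝ) (hε : 0 < ε) :
    Nonempty
      (({p : ℝ × ℝ × ℝ | p.1 ^ 2 = p.2.2 * p.2.1 ^ 2 ∧ 0 ≤ p.2.2 ∧
          p.1 ^ 2 + p.2.1 ^ 2 + p.2.2 ^ 2 = ε ^ 2} : Set (ℝ × ℝ × ℝ)) ≃ₜ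
        ({q : ℝ × ℝ | (q.1 - 1) ^ 2 + q.2 ^ 2 = 1 ∨
          (q.1 + 1) ^ 2 + q.2 ^ 2 = 1} : Set (ℝ × ℝ))) := by
  set F : Set (ℝ × ℝ) :=
    {q : ℝ × ℝ | (q.1 - 1) ^ 2 + q.2 ^ 2 = 1 ∨ (q.1 + 1) ^ 2 + q.2 ^ 2 = 1} with hFdef
  set L : Set (ℝ × ℝ × ℝ) :=
    {p : ℝ × ℝ × ℝ | p.1 ^ 2 = p.2.2 * p.2.1 ^ 2 ∧ 0 ≤ p.2.2 ∧
      p.1 ^ 2 + p.2.1 ^ 2 + p.2.2 ^ 2 = ε ^ 2} with hLdef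
  have hmF : ∀ q : ℝ × ℝ, q ∈ F → q.2^2 = 2*|q.1| - q.1^2 := fun q hq => (memF_iff q).mp hq
  have hmemL : ∀ q : ℝ × ℝ, q ∈ F → WUmap ε q ∈ L := by
    rintro ⟨a, b⟩ hq
    exact WUmem ε hε (hmF _ hq)
  let G : F → L := fun q => ⟨WUmap ε q, hmemL q q.2⟩
  have hGinj : Function.Injective G := by
    rintro ⟨⟨a, b⟩, hq⟩ ⟨⟨a', b'⟩, hq'⟩ h
    exact Subtype.ext (WUinj ε hε (hmF _ hq) (hmF _ hq') (Subtype.ext_iff.mp h))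
  have hGsurj : Function.Surjective G := by
    rintro ⟨⟨x, y, z⟩, hp⟩
    obtain ⟨hxz, hz0, hs⟩ := hp
    obtain ⟨a, b, hab, heq⟩ := WUsurj ε hε hxz hz0 hs
    exact ⟨⟨(a, b), (memF_iff (a, b)).mpr hab⟩, Subtype.ext heq⟩
  have hle : ∀ q : F, ((q : ℝ × ℝ)).1^2 ≤ 4 := by
    intro q
    have h := hmF _ q.2
    nlinarith [sq_abs (q : ℝ × ℝ).1, abs_nonneg (q : ℝ × ℝ).1, sq_nonneg (q : ℝ × ℝ).2]
  have hGcont : Continuous G := by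
    apply Continuous.subtype_mk
    have hc1 : Continuous fun q : F => (q : ℝ × ℝ).1 := continuous_fst.comp continuous_subtype_val
    have hc2 : Continuous fun q : F => (q : ℝ × ℝ).2 := continuous_snd.comp continuous_subtype_val
    have hden : ∀ q : F, (16 * (1 + ε * (4 - ((q : ℝ × ℝ)).1^2) / 4)) ≠ 0 := by
      intro q; have := hle q; have : (0:ℝ) < 1 + ε * (4 - ((q : ℝ × ℝ)).1^2) / 4 := by nlinarith
      positivity
    have hden' : ∀ q : F, (64 * (1 + ε * (4 - ((q : ℝ × ℝ)).1^2) / 4)) ≠ 0 := by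
      intro q; have := hle q; have : (0:ℝ) < 1 + ε * (4 - ((q : ℝ × ℝ)).1^2) / 4 := by nlinarith
      positivity
    simp only [WUmap]
    refine Continuous.prodMk ?_ (Continuous.prodMk ?_ ?_)
    · refine hc2.mul (Real.continuous_sqrt.comp (Continuous.div ?_ ?_ hden'))
      · exact ((continuous_const.mul hc1.abs).mul (continuous_const.add hc1.abs)).mul
          (continuous_const.sub (hc1.pow 2))
      · exact continuous_const.mul (continuous_const.add
          ((continuous_const.mul (continuous_const.sub (hc1.pow 2))).div_const 4))
    · refine hc1.mul (Real.continuous_sqrt.comp (Continuous.div ?_ ?_ hden))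
      · exact continuous_const.mul (continuous_const.sub (hc1.pow 2))
      · exact continuous_const.mul (continuous_const.add
          ((continuous_const.mul (continuous_const.sub (hc1.pow 2))).div_const 4))
    · exact (continuous_const.mul (continuous_const.sub (hc1.pow 2))).div_const 4
  have hclosed : IsClosed F := by
    rw [hFdef, Set.setOf_or]
    exact (isClosed_eq (by fun_prop) continuous_const).union
      (isClosed_eq (by fun_prop) continuous_const)
  have hsub : F ⊆ Metric.closedBall 0 2 := by
    intro q hq
    have h := hmF q hq
    have h1 : |q.1| ≤ 2 := by nlinarith [sq_nonneg q.2, sq_abs q.1, abs_nonneg q.1]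
    have h2 : |q.2| ≤ 2 := by nlinarith [sq_abs q.2, abs_nonneg q.2, sq_abs q.1, abs_nonneg q.1]
    rw [mem_closedBall_zero_iff, Prod.norm_def, Real.norm_eq_abs, Real.norm_eq_abs]
    exact max_le h1 h2
  have : CompactSpace F :=
    isCompact_iff_compactSpace.mp ((isCompact_closedBall (0 : ℝ × ℝ) 2).of_isClosed_subset
      hclosed hsub)
  exact ⟨(Continuous.homeoOfEquivCompactToT2
    (f := Equiv.ofBijective G ⟨hGinj, hGsurj⟩) hGcont).symm⟩
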